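/- For unit vectors n, r ∈ ℝ³ and ε ∈ [0,1], the matrix identity P(n,ε) P(r) P(n,ε) = λ(ε,n,r) P(r') holds, where λ(ε,n,r) = (1 + ε² + 2ε(n·r))/4 and r' = ((1-ε²)r + 2ε(1 + ε(n·r))n) / (1 + ε² + 2ε(n·r)), provided λ(ε,n,r) > 0. -/

import Mathlib

open Matrix

noncomputable section

/-- Pauli matrix σ₁. -/
def pauli1 : Matrix (Fin 2) (Fin 2) ℂ := !![0, 1; 1, 0]
/-- Pauli matrix σ₂. -/
def pauli2 : Matrix (Fin 2) (Fin 2) ℂ := !![0, -Complex.I; Complex.I, 0]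
/-- Pauli matrix σ₃. -/
def pauli3 : Matrix (Fin 2) (Fin 2) ℂ := !![1, 0; 0, -1]

/-- σ(v) = v₁σ₁ + v₂σ₂ + v₃σ₃ for v ∈ ℝ³. -/
def pauliVec (v : Fin 3 → ℝ) : Matrix (Fin 2) (Fin 2) ℂ :=
  (v 0 : ℂ) • pauli1 + (v 1 : ℂ) • pauli2 + (v 2 : ℂ) • pauli3

/-- Euclidean dot product on ℝ³. -/
def dot3 (a b : Fin 3 → ℝ) : ℝ := a 0 * b 0 + a 1 * b 1 + a 2 * b 2

/-- v is a unit vector of ℝ³. -/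
def IsUnitVec (v : Fin 3 → ℝ) : Prop := dot3 v v = 1

/-- P(n,ε) = (I + ε σ(n))/2. -/
def Pmat (n : Fin 3 → ℝ) (ε : ℝ) : Matrix (Fin 2) (Fin 2) ℂ :=
  ((1 : ℂ)/2) • (1 + (ε : ℂ) • pauliVec n)

/-- λ(ε,n,r) = (1 + ε² + 2ε(n·r))/4. -/
def lam (ε : ℝ) (n r : Fin 3 → ℝ) : ℝ := (1 + ε^2 + 2*ε*(dot3 n r))/4

/-- The map w(r) = ((1-ε²)r + 2ε(1+ε(n·r))n)/(1+ε²+2ε(n·r)). -/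
def wmap (ε : ℝ) (n r : Fin 3 → ℝ) : Fin 3 → ℝ :=
  fun i => ((1 - ε^2) * r i + 2*ε*(1 + ε*(dot3 n r)) * n i) / (1 + ε^2 + 2*ε*(dot3 n r))

set_option maxHeartbeats 1000000 in
/-- P(n,ε) P(r) P(n,ε) = λ(ε,n,r) P(r'). -/
theorem stmt2 (n r : Fin 3 → ℝ) (hn : IsUnitVec n) (hr : IsUnitVec r)
    (ε : ℝ) (hε : ε ∈ Set.Icc (0:ℝ) 1) (hlam : 0 < lam ε n r) :
    Pmat n ε * Pmat r 1 * Pmat n ε = (lam ε n r : ℂ) • Pmat (wmap ε n r) 1 := by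
  have hD : (1 + ε^2 + 2*ε*(dot3 n r)) ≠ 0 := by unfold lam at hlam; linarith
  have hDc : ((1:ℂ) + (ε:ℂ)^2 + 2*(ε:ℂ)*((dot3 n r):ℂ)) ≠ 0 := by
    intro h
    apply hD
    have h2 : ((1 + ε^2 + 2*ε*(dot3 n r) : ℝ) : ℂ) = 0 := by push_cast; linear_combination h
    exact_mod_cast h2
  have key : (lam ε n r : ℂ) • Pmat (wmap ε n r) 1 =
      ((1:ℂ)/2) • ((lam ε n r : ℂ) • (1 : Matrix (Fin 2) (Fin 2) ℂ) +
        ((1:ℂ)/4) • pauliVec (fun i => (1-ε^2)*r i + 2*ε*(1+ε*(dot3 n r))*n i)) := by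
    ext i j
    fin_cases i <;> fin_cases j <;>
      simp only [Pmat, pauliVec, wmap, lam, pauli1, pauli2, pauli3, Matrix.smul_apply, Matrix.of_apply,
        Matrix.add_apply, Matrix.one_apply, Matrix.cons_val', Matrix.cons_val_zero,
        Matrix.cons_val_one, Matrix.head_cons, Matrix.empty_val', Matrix.cons_val_fin_one,
        smul_eq_mul, Fin.zero_eta, Fin.mk_one, if_true, if_false, ite_true, ite_false,
        Fin.one_eq_zero_iff, Fin.zero_eq_one_iff, Ne, one_ne_zero, OfNat.ofNat_ne_one,
        not_false_iff, reduceCtorEq, reduceIte] <;>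
      push_cast <;> field_simp <;> rw [mul_add, mul_div_cancel₀ _ (show (1:ℂ) + (ε:ℂ)^2 + (ε:ℂ) * 2 * ((dot3 n r):ℂ) ≠ 0 by contrapose! hDc; linear_combination hDc)] <;> try ring
  rw [key]
  unfold IsUnitVec dot3 at hn hr
  have hnC : (n 0:ℂ)^2 + (n 1:ℂ)^2 + (n 2:ℂ)^2 = 1 := by
    rw [← Complex.ofReal_one, ← hn]; push_cast; ring
  ext i j
  fin_cases i <;> fin_cases j <;>
    simp [Pmat, pauliVec, lam, dot3, pauli1, pauli2, pauli3, Matrix.mul_apply,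
      Fin.sum_univ_two, Matrix.one_apply] <;> push_cast
  · linear_combination ((↑ε)^2/8 - (r 2:ℂ)*(↑ε)^2/8) * hnC + (-((n 1:ℂ)*(r 1:ℂ)*↑ε)/4 - (n 1:ℂ)*(n 2:ℂ)*(r 1:ℂ)*(↑ε)^2/4 - (n 1:ℂ)^2*(↑ε)^2/8 + (n 1:ℂ)^2*(r 2:ℂ)*(↑ε)^2/8) * Complex.I_sq
  · linear_combination ((r 1:ℂ)*(↑ε)^2*Complex.I/8 - (r 0:ℂ)*(↑ε)^2/8) * hnC + ((n 1:ℂ)^2*(r 1:ℂ)*(↑ε)^2*Complex.I/8 + (n 1:ℂ)^2*(r 0:ℂ)*(↑ε)^2/8 - (n 0:ℂ)*(n 1:ℂ)*(r 1:ℂ)*(↑ε)^2/4) * Complex.I_sq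
  · linear_combination (-((r 1:ℂ)*(↑ε)^2*Complex.I)/8 - (r 0:ℂ)*(↑ε)^2/8) * hnC + (-((n 1:ℂ)^2*(r 1:ℂ)*(↑ε)^2*Complex.I)/8 + (n 1:ℂ)^2*(r 0:ℂ)*(↑ε)^2/8 - (n 0:ℂ)*(n 1:ℂ)*(r 1:ℂ)*(↑ε)^2/4) * Complex.I_sq
  · linear_combination ((↑ε)^2/8 + (r 2:ℂ)*(↑ε)^2/8) * hnC + (-((n 1:ℂ)*(r 1:ℂ)*↑ε)/4 + (n 1:ℂ)*(n 2:ℂ)*(r 1:ℂ)*(↑ε)^2/4 - (n 1:ℂ)^2*(↑ε)^2/8 - (n 1:ℂ)^2*(r 2:ℂ)*(↑ε)^2/8) * Complex.I_sq
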